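/- Let Λ = [[a,b],[c,d]] be a real 2×2 matrix with ad − bc = 1 and b > 0. Then the Linear Canonical Transform 𝓛_Λ is unitary on Schwartz functions: for every Schwartz function f : ℝ → ℂ, ∫_ℝ |(𝓛_Λ f)(ω)|² dω = ∫_ℝ |f(t)|² dt. -/

import Mathlib

open MeasureTheory Complex

noncomputable section

/-- The LCT kernel `k_Λ(t, ω) = (1/√(-2πib)) exp(-(i/(2b))(a t² + d ω² - 2 ω t))`,
where `√` is the principal branch of the complex square root. -/
def lctKernel (a b d : ℝ) (t ω : ℝ) : ℂ :=
  (((-2 : ℂ) * (Real.pi : ℂ) * Complex.I * (b : ℂ)) ^ ((1 : ℂ) / 2))⁻¹ *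
    Complex.exp (-(Complex.I / (2 * (b : ℂ))) *
      ((a : ℂ) * (t : ℂ) ^ 2 + (d : ℂ) * (ω : ℂ) ^ 2 - 2 * (ω : ℂ) * (t : ℂ)))

/-- The Linear Canonical Transform `(𝓛_Λ f)(ω) = ∫ f(t) conj (k_Λ(t,ω)) dt`. -/
def lct (a b d : ℝ) (f : ℝ → ℂ) (ω : ℝ) : ℂ :=
  ∫ t : ℝ, f t * (starRingEnd ℂ) (lctKernel a b d t ω)

open FourierTransform Polynomial

/-! ### Auxiliary lemmas: Plancherel for Schwartz functions -/

lemma lct_conj_integrable {F : ℝ → ℂ} (hF : Integrable F) :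
    Integrable (fun ξ : ℝ => (starRingEnd ℂ) (F ξ)) :=
  (Complex.conjCLE.toContinuousLinearEquiv.toContinuousLinearMap).integrable_comp hF

lemma lct_flip_inner : (innerₗ ℝ).flip = innerₗ ℝ := by
  apply LinearMap.ext; intro x; apply LinearMap.ext; intro y
  simpa using real_inner_comm x y

lemma lct_fourier_conj (F : ℝ → ℂ) (x : ℝ) :
    𝓕 (fun ξ => (starRingEnd ℂ) (F ξ)) x = (starRingEnd ℂ) (𝓕⁻ F x) := by
  rw [Real.fourier_eq', Real.fourierInv_eq', ← integral_conj]
  congr 1; ext ξ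
  simp only [smul_eq_mul, map_mul, ← Complex.exp_conj, map_neg, Complex.conj_ofReal,
    Complex.conj_I, mul_neg, neg_mul, neg_neg]
  push_cast
  ring_nf

lemma plancherel_schwartz (f : SchwartzMap ℝ ℂ) :
    ∫ ξ : ℝ, ‖𝓕 (⇑f) ξ‖ ^ 2 = ∫ x : ℝ, ‖f x‖ ^ 2 := by
  have hFeq : ⇑(SchwartzMap.fourierTransformCLM ℂ f) = 𝓕 ⇑f := by
    simp [SchwartzMap.fourierTransformCLM_apply, SchwartzMap.fourier_coe]
  have hF : Integrable (𝓕 ⇑f) := by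
    rw [← hFeq]; exact (SchwartzMap.fourierTransformCLM ℂ f).integrable
  have hf : Integrable (⇑f) := f.integrable
  have hg : Integrable (fun ξ : ℝ => (starRingEnd ℂ) (𝓕 (⇑f) ξ)) := lct_conj_integrable hF
  have key : ∫ ξ : ℝ, (𝓕 (⇑f) ξ) * (starRingEnd ℂ) (𝓕 (⇑f) ξ)
      = ∫ x : ℝ, f x * (starRingEnd ℂ) (f x) := by
    have hL : Continuous fun p : ℝ × ℝ => (innerₗ ℝ) p.1 p.2 := continuous_inner
    have h := VectorFourier.integral_bilin_fourierIntegral_eq_flip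
      (E := ℂ) (F := ℂ) (G := ℂ) (μ := (volume : Measure ℝ)) (ν := (volume : Measure ℝ))
      (L := innerₗ ℝ) (f := ⇑f) (g := fun ξ => (starRingEnd ℂ) (𝓕 (⇑f) ξ))
      (ContinuousLinearMap.mul ℂ ℂ) Real.continuous_fourierChar hL hf hg
    rw [lct_flip_inner] at h
    have h2 : ∀ x : ℝ, VectorFourier.fourierIntegral 𝐞 volume (innerₗ ℝ)
        (fun ξ => (starRingEnd ℂ) (𝓕 (⇑f) ξ)) x = (starRingEnd ℂ) (f x) := by
      intro x
      have := lct_fourier_conj (𝓕 ⇑f) x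
      rw [f.continuous.fourierInv_fourier_eq hf hF] at this
      exact this
    simp [ContinuousLinearMap.mul_apply', h2] at h; exact h
  have e1 : ∀ z : ℂ, z * (starRingEnd ℂ) z = ((‖z‖ ^ 2 : ℝ) : ℂ) := by
    intro z; rw [Complex.mul_conj']; norm_cast
  simp_rw [e1] at key
  have cast : ∀ g : ℝ → ℝ, (∫ x : ℝ, ((g x : ℝ) : ℂ)) = ((∫ x : ℝ, g x : ℝ) : ℂ) := fun g =>
    integral_ofReal (𝕜 := ℂ)
  rw [cast, cast] at key
  exact_mod_cast key

/-! ### Auxiliary lemmas: the chirp `t ↦ exp(i r t²)` has temperate growth -/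

lemma lct_chirp_contDiff (c : ℂ) :
    ContDiff ℝ ⊤ (fun t : ℝ => Complex.exp (c * (t : ℂ) ^ 2)) := by
  have h1 : ContDiff ℝ ⊤ (fun t : ℝ => c * (t : ℂ) ^ 2) :=
    contDiff_const.mul (Complex.ofRealCLM.contDiff.pow 2)
  exact ((Complex.contDiff_exp (𝕜 := ℂ)).restrict_scalars ℝ).comp h1

lemma lct_chirp_hasDerivAt (c : ℂ) (p : Polynomial ℂ) (t : ℝ) :
    HasDerivAt (fun s : ℝ => p.eval (s : ℂ) * Complex.exp (c * (s : ℂ) ^ 2))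
      ((p.derivative + p * (Polynomial.C (2 * c) * Polynomial.X)).eval (t : ℂ) *
        Complex.exp (c * (t : ℂ) ^ 2)) t := by
  have h1 : HasDerivAt (fun s : ℝ => p.eval (s : ℂ)) (p.derivative.eval (t : ℂ)) t :=
    (p.hasDerivAt (t : ℂ)).comp_ofReal
  have h2 : HasDerivAt (fun s : ℝ => c * (s : ℂ) ^ 2) (2 * c * (t : ℂ)) t := by
    have h0 : HasDerivAt (fun s : ℝ => ((s : ℂ))) (1 : ℂ) t := Complex.ofRealCLM.hasDerivAt
    have hsq : HasDerivAt (fun s : ℝ => ((s : ℂ) ^ 2)) (2 * (t : ℂ)) t := by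
      simpa using (hasDerivAt_pow 2 (t : ℂ)).comp_ofReal
    have := hsq.const_mul c
    exact this.congr_deriv (by ring)
  have h3 := h1.mul h2.cexp
  refine h3.congr_deriv ?_
  simp [Polynomial.eval_mul, Polynomial.eval_add]
  ring

lemma lct_chirp_iteratedDeriv (c : ℂ) (n : ℕ) :
    ∃ p : Polynomial ℂ, ∀ t : ℝ,
      iteratedDeriv n (fun s : ℝ => Complex.exp (c * (s : ℂ) ^ 2)) t
        = p.eval (t : ℂ) * Complex.exp (c * (t : ℂ) ^ 2) := by
  induction n with
  | zero => exact ⟨1, fun t => by simp⟩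
  | succ n ih =>
    obtain ⟨p, hp⟩ := ih
    refine ⟨p.derivative + p * (Polynomial.C (2 * c) * Polynomial.X), fun t => ?_⟩
    rw [iteratedDeriv_succ]
    have : iteratedDeriv n (fun s : ℝ => Complex.exp (c * (s : ℂ) ^ 2))
        = fun s : ℝ => p.eval (s : ℂ) * Complex.exp (c * (s : ℂ) ^ 2) := funext hp
    rw [this]
    exact (lct_chirp_hasDerivAt c p t).deriv

lemma lct_poly_bound (p : Polynomial ℂ) :
    ∃ C : ℝ, 0 ≤ C ∧ ∀ t : ℝ, ‖p.eval (t : ℂ)‖ ≤ C * (1 + ‖t‖) ^ p.natDegree := by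
  refine ⟨∑ i ∈ Finset.range (p.natDegree + 1), ‖p.coeff i‖,
    Finset.sum_nonneg fun _ _ => norm_nonneg _, fun t => ?_⟩
  rw [Polynomial.eval_eq_sum_range]
  refine (norm_sum_le _ _).trans ?_
  rw [Finset.sum_mul]
  refine Finset.sum_le_sum fun i hi => ?_
  rw [norm_mul, norm_pow]
  have h1 : (1 : ℝ) ≤ 1 + ‖t‖ := by simp [norm_nonneg]
  have h2 : ‖(t : ℂ)‖ ≤ 1 + ‖t‖ := by
    rw [Complex.norm_real]; linarith
  calc ‖p.coeff i‖ * ‖(t : ℂ)‖ ^ i ≤ ‖p.coeff i‖ * (1 + ‖t‖) ^ i :=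
        mul_le_mul_of_nonneg_left (pow_le_pow_left₀ (norm_nonneg _) h2 i) (norm_nonneg _)
    _ ≤ ‖p.coeff i‖ * (1 + ‖t‖) ^ p.natDegree :=
        mul_le_mul_of_nonneg_left
          (pow_le_pow_right₀ h1 (Nat.lt_succ_iff.mp (Finset.mem_range.mp hi))) (norm_nonneg _)

lemma lct_chirp_temperate (r : ℝ) :
    Function.HasTemperateGrowth (fun t : ℝ => Complex.exp ((Complex.I * r) * (t : ℂ) ^ 2)) := by
  refine ⟨(lct_chirp_contDiff (Complex.I * r)).of_le le_top, fun n => ?_⟩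
  obtain ⟨p, hp⟩ := lct_chirp_iteratedDeriv (Complex.I * r) n
  obtain ⟨C, hC0, hC⟩ := lct_poly_bound p
  refine ⟨p.natDegree, C, fun x => ?_⟩
  rw [norm_iteratedFDeriv_eq_norm_iteratedDeriv, hp x, norm_mul]
  have : ‖Complex.exp ((Complex.I * r) * (x : ℂ) ^ 2)‖ = 1 := by
    rw [Complex.norm_exp]
    have : ((Complex.I * r) * (x : ℂ) ^ 2).re = 0 := by
      simp [Complex.mul_re, Complex.mul_im, pow_two]
    rw [this, Real.exp_zero]
  rw [this, mul_one]
  exact hC x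

/-! ### Auxiliary lemmas: the LCT as a Fourier transform -/

lemma lct_eq (a b d : ℝ) (hb : 0 < b) (f : ℝ → ℂ) (ω : ℝ) :
    lct a b d f ω =
      (starRingEnd ℂ) ((((-2 : ℂ) * (Real.pi : ℂ) * Complex.I * (b : ℂ)) ^ ((1 : ℂ) / 2))⁻¹) *
        Complex.exp (((d * ω ^ 2 / (2 * b) : ℝ) : ℂ) * Complex.I) *
        𝓕
          (fun t : ℝ => f t * Complex.exp ((Complex.I * (a / (2 * b))) * (t : ℂ) ^ 2))
          (ω / (2 * Real.pi * b)) := by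
  have hb' : (b : ℂ) ≠ 0 := Complex.ofReal_ne_zero.mpr hb.ne'
  have hπ : (Real.pi : ℂ) ≠ 0 := Complex.ofReal_ne_zero.mpr Real.pi_ne_zero
  rw [Real.fourier_real_eq, mul_assoc, ← integral_const_mul, ← integral_const_mul, lct]
  congr 1; funext t
  have key : (starRingEnd ℂ) (-(Complex.I / (2 * (b : ℂ))) *
        ((a : ℂ) * (t : ℂ) ^ 2 + (d : ℂ) * (ω : ℂ) ^ 2 - 2 * (ω : ℂ) * (t : ℂ)))
      = ((d * ω ^ 2 / (2 * b) : ℝ) : ℂ) * Complex.I +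
        (((2 * Real.pi * (-(t * (ω / (2 * Real.pi * b)))) : ℝ) : ℂ) * Complex.I +
          (Complex.I * (a / (2 * b))) * (t : ℂ) ^ 2) := by
    rw [show (2 * Real.pi * (-(t * (ω / (2 * Real.pi * b)))) : ℝ) = -(t * ω / b) by
      field_simp [Real.pi_ne_zero]]
    simp only [map_mul, map_neg, map_div₀, map_add, map_sub, map_pow, map_ofNat,
      Complex.conj_I, Complex.conj_ofReal]
    push_cast
    field_simp
    ring
  simp only [lctKernel, map_mul, ← Complex.exp_conj, Circle.smul_def, Real.fourierChar_apply,
    smul_eq_mul, key, Complex.exp_add]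
  ring

lemma lct_norm_sq (a b d : ℝ) (hb : 0 < b) (f : ℝ → ℂ) (ω : ℝ) :
    ‖lct a b d f ω‖ ^ 2 = (2 * Real.pi * b)⁻¹ *
      ‖𝓕
          (fun t : ℝ => f t * Complex.exp ((Complex.I * (a / (2 * b))) * (t : ℂ) ^ 2))
          (ω / (2 * Real.pi * b))‖ ^ 2 := by
  have h2πb : (0 : ℝ) < 2 * Real.pi * b := by positivity
  rw [lct_eq a b d hb f ω, norm_mul, norm_mul, mul_pow, mul_pow]
  have h1 : ‖Complex.exp (((d * ω ^ 2 / (2 * b) : ℝ) : ℂ) * Complex.I)‖ = 1 := by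
    rw [Complex.norm_exp_ofReal_mul_I]
  have h2 : ‖(starRingEnd ℂ)
        ((((-2 : ℂ) * (Real.pi : ℂ) * Complex.I * (b : ℂ)) ^ ((1 : ℂ) / 2))⁻¹)‖ ^ 2
      = (2 * Real.pi * b)⁻¹ := by
    rw [RCLike.norm_conj, norm_inv]
    have hz : ((-2 : ℂ) * (Real.pi : ℂ) * Complex.I * (b : ℂ)) ≠ 0 := by
      simp [Complex.ofReal_ne_zero, Real.pi_ne_zero, hb.ne', Complex.I_ne_zero]
    have habs : ‖((-2 : ℂ) * (Real.pi : ℂ) * Complex.I * (b : ℂ))‖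
        = 2 * Real.pi * b := by
      simp only [norm_mul, Complex.norm_I, Complex.norm_real, Real.norm_eq_abs]
      rw [show ‖(-2 : ℂ)‖ = 2 by norm_num]
      rw [abs_of_pos Real.pi_pos, abs_of_pos hb]; ring
    rw [Complex.norm_cpow_of_ne_zero hz, habs]
    have hre : ((1 : ℂ) / 2).re = 1 / 2 := by norm_num
    have him : ((1 : ℂ) / 2).im = 0 := by norm_num
    rw [hre, him, mul_zero, Real.exp_zero, div_one, inv_pow]
    have hsq : ((2 * Real.pi * b) ^ ((1 : ℝ) / 2)) ^ (2 : ℕ) = 2 * Real.pi * b := by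
      rw [← Real.rpow_natCast ((2 * Real.pi * b) ^ ((1 : ℝ) / 2)) 2, ← Real.rpow_mul h2πb.le]
      norm_num
    rw [hsq]
  rw [h1, h2]; ring

/-- **Unitarity of the LCT on Schwartz functions.**  For `Λ = [[a,b],[c,d]]` with
`ad - bc = 1` and `b > 0`, `∫ |(𝓛_Λ f)(ω)|² dω = ∫ |f(t)|² dt`. -/
theorem lct_unitary (a b c d : ℝ) (hdet : a * d - b * c = 1) (hb : 0 < b)
    (f : SchwartzMap ℝ ℂ) :
    ∫ ω : ℝ, ‖lct a b d (fun x => f x) ω‖ ^ 2 = ∫ t : ℝ, ‖f t‖ ^ 2 := by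
  have h2πb : (0 : ℝ) < 2 * Real.pi * b := by positivity
  set r : ℝ := a / (2 * b) with hr
  set g : SchwartzMap ℝ ℂ :=
    SchwartzMap.bilinLeftCLM (ContinuousLinearMap.mul ℝ ℂ) (lct_chirp_temperate r) f with hgdef
  have hg : ∀ t : ℝ, g t = f t * Complex.exp ((Complex.I * r) * (t : ℂ) ^ 2) := fun t => rfl
  have hchirp_norm : ∀ t : ℝ, ‖Complex.exp ((Complex.I * r) * (t : ℂ) ^ 2)‖ = 1 := by
    intro t
    rw [Complex.norm_exp]
    have : ((Complex.I * r) * (t : ℂ) ^ 2).re = 0 := by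
      simp [Complex.mul_re, Complex.mul_im, pow_two]
    rw [this, Real.exp_zero]
  calc ∫ ω : ℝ, ‖lct a b d (fun x => f x) ω‖ ^ 2
      = ∫ ω : ℝ, (2 * Real.pi * b)⁻¹ * ‖𝓕 (⇑g) (ω / (2 * Real.pi * b))‖ ^ 2 := by
        congr 1; funext ω
        rw [lct_norm_sq a b d hb (fun x => f x) ω]
        rw [show (fun t : ℝ => f t * Complex.exp ((Complex.I * ((a : ℂ) / (2 * (b : ℂ)))) * (t : ℂ) ^ 2))
            = ⇑g by
          funext t; rw [hg t]; norm_cast]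
    _ = (2 * Real.pi * b)⁻¹ * ∫ ω : ℝ, ‖𝓕 (⇑g) (ω / (2 * Real.pi * b))‖ ^ 2 :=
        integral_const_mul _ _
    _ = (2 * Real.pi * b)⁻¹ * ((2 * Real.pi * b) • ∫ ξ : ℝ, ‖𝓕 (⇑g) ξ‖ ^ 2) := by
        rw [MeasureTheory.Measure.integral_comp_div (fun ξ : ℝ => ‖𝓕 (⇑g) ξ‖ ^ 2) (2 * Real.pi * b),
          abs_of_pos h2πb]
    _ = ∫ ξ : ℝ, ‖𝓕 (⇑g) ξ‖ ^ 2 := by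
        rw [smul_eq_mul, ← mul_assoc, inv_mul_cancel₀ h2πb.ne', one_mul]
    _ = ∫ t : ℝ, ‖g t‖ ^ 2 := plancherel_schwartz g
    _ = ∫ t : ℝ, ‖f t‖ ^ 2 := by
        congr 1; funext t
        rw [hg t, norm_mul, hchirp_norm t, mul_one]
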